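/- Every unbounded isometry of a Urysohn space U moves maximally: for every finite nonempty X ⊆ U and every finite tuple ā = (a_1, …, a_n) of points of U there is a tuple ā' = (a'_1, …, a'_n) in U with d(a'_i, a'_j) = d(a_i, a_j) and d(a'_i, x) = d(a_i, x) for all i, j and all x ∈ X, such that ā' is independent from g(ā') over X; g(X), i.e. ā' ⫫_X g(X) ∪ g(ā') and ā' ∪ X ⫫_{g(X)} g(ā'). -/

import Mathlib

open Metric Set

namespace TentZieglerU

/-- A metric space is finitely injective if every Katětov function on a finite subset
is realised as the distance function from some point. -/
def FinitelyInjective (U : Type*) [MetricSpace U] : Prop :=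
  ∀ X : Set U, X.Finite → ∀ f : U → ℝ,
    (∀ x ∈ X, ∀ x' ∈ X, |f x - f x'| ≤ dist x x' ∧ dist x x' ≤ f x + f x') →
    ∃ y : U, ∀ x ∈ X, dist y x = f x

/-- An isometry `g` of `U` is unbounded if `sup_x d(x, g x) = ∞`. -/
def IsUnbounded {U : Type*} [MetricSpace U] (g : U ≃ᵢ U) : Prop :=
  ∀ N : ℝ, ∃ x : U, N < dist x (g x)

/-- The independence relation of the Urysohn space: `A ⫫_B C` iff every pair
`a ∈ A`, `c ∈ C` has a geodesic through some `b ∈ B`. -/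
def MIndep {U : Type*} [MetricSpace U] (A B C : Set U) : Prop :=
  ∀ a ∈ A, ∀ c ∈ C, ∃ b ∈ B, dist a c = dist a b + dist b c


section Fabricate

variable {U : Type*} [MetricSpace U]

lemma fabricate (hU : FinitelyInjective U) (g : U ≃ᵢ U) (hg : IsUnbounded g)
    (T : Finset U) (hT : T.Nonempty) (ρ : U → ℝ)
    (hρ0 : ∀ z ∈ T, 0 ≤ ρ z)
    (hρL : ∀ z ∈ T, ∀ z' ∈ T, ρ z ≤ ρ z' + dist z' z)
    (Λ : ℝ) :
    ∃ w S, 0 ≤ S ∧ Λ ≤ S ∧ (∀ z ∈ T, dist w z = S + ρ z) ∧ Λ ≤ dist w (g w) := by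
  classical
  obtain ⟨Dm, hDm, hDm0⟩ : ∃ Dm : ℝ, (∀ z ∈ T, ∀ z' ∈ T, dist z z' ≤ Dm) ∧ 0 ≤ Dm := by
    refine ⟨T.sup' hT (fun z => T.sup' hT (fun z' => dist z z')), ?_, ?_⟩
    · intro z hz z' hz'
      calc dist z z' ≤ T.sup' hT (fun z' => dist z z') := Finset.le_sup' _ hz'
        _ ≤ _ := Finset.le_sup' (fun z => T.sup' hT (fun z' => dist z z')) hz
    · have hT' := hT
      obtain ⟨z, hz⟩ := hT'
      have h1 : dist z z ≤ T.sup' hT (fun z' => dist z z') := Finset.le_sup' _ hz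
      have h2 : T.sup' hT (fun z' => dist z z') ≤
          T.sup' hT (fun z => T.sup' hT (fun z' => dist z z')) :=
        Finset.le_sup' (fun z => T.sup' hT (fun z' => dist z z')) hz
      simp only [dist_self] at h1
      linarith
  obtain ⟨Bρ, hBρ, hBρ0⟩ : ∃ B : ℝ, (∀ z ∈ T, ρ z ≤ B) ∧ 0 ≤ B := by
    refine ⟨T.sup' hT ρ, fun z hz => Finset.le_sup' ρ hz, ?_⟩
    have hT' := hT
    obtain ⟨z, hz⟩ := hT'
    exact le_trans (hρ0 z hz) (Finset.le_sup' ρ hz)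
  obtain ⟨E, hE, hE0⟩ : ∃ E : ℝ, (∀ z ∈ T, dist z (g z) ≤ E) ∧ 0 ≤ E := by
    refine ⟨T.sup' hT (fun z => dist z (g z)),
      fun z hz => Finset.le_sup' (fun z => dist z (g z)) hz, ?_⟩
    have hT' := hT
    obtain ⟨z, hz⟩ := hT'
    exact le_trans dist_nonneg (Finset.le_sup' (fun z => dist z (g z)) hz)
  obtain ⟨u, hu⟩ := hg (2*|Λ| + E + 2*Bρ + 8*Dm + 8)
  have habsΛ : (0:ℝ) ≤ |Λ| := abs_nonneg Λ
  have hfar : ∀ z ∈ T, (dist u (g u) - E)/2 ≤ dist u z := by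
    intro z hz
    have h1 : dist u (g u) ≤ dist u z + dist z (g z) + dist (g z) (g u) := dist_triangle4 _ _ _ _
    have h2 : dist (g z) (g u) = dist z u := g.dist_eq z u
    have h3 : dist z u = dist u z := dist_comm _ _
    have h4 := hE z hz
    linarith
  obtain ⟨S, z₂, hz₂, hSdef, hSle⟩ :
      ∃ S, ∃ z₂ ∈ T, S = dist u z₂ - ρ z₂ ∧ ∀ z ∈ T, S ≤ dist u z - ρ z := by
    obtain ⟨z₂, hz₂, e⟩ := Finset.exists_mem_eq_inf' hT (fun z => dist u z - ρ z)
    exact ⟨_, z₂, hz₂, e.symm ▸ e.symm ▸ rfl, fun z hz => e ▸ Finset.inf'_le _ hz⟩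
  obtain ⟨Mx, z₁, hz₁, hMxdef, hMxge⟩ :
      ∃ Mx, ∃ z₁ ∈ T, Mx = dist u z₁ - ρ z₁ ∧ ∀ z ∈ T, dist u z - ρ z ≤ Mx := by
    obtain ⟨z₁, hz₁, e⟩ := Finset.exists_mem_eq_sup' hT (fun z => dist u z - ρ z)
    exact ⟨_, z₁, hz₁, e.symm ▸ rfl, fun z hz => e ▸ Finset.le_sup' _ hz⟩
  set t := Mx - S with htdef
  have hf1 : ∀ z ∈ T, S + ρ z ≤ dist u z := by
    intro z hz; have := hSle z hz; linarith
  have hf2 : ∀ z ∈ T, dist u z ≤ Mx + ρ z := by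
    intro z hz; have := hMxge z hz; linarith
  have ht3 : t ≤ 2*Dm := by
    have h1 : dist u z₁ ≤ dist u z₂ + dist z₂ z₁ := dist_triangle _ _ _
    have h2 : ρ z₂ ≤ ρ z₁ + dist z₁ z₂ := hρL z₂ hz₂ z₁ hz₁
    have h3 : dist z₂ z₁ ≤ Dm := hDm z₂ hz₂ z₁ hz₁
    have h4 : dist z₁ z₂ ≤ Dm := hDm z₁ hz₁ z₂ hz₂
    rw [htdef, hMxdef, hSdef]; linarith
  have hS4 : |Λ| + 4*Dm + 4 ≤ S := by
    have h1 := hfar z₂ hz₂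
    have h2 := hBρ z₂ hz₂
    rw [hSdef]
    linarith
  have hS0 : (0:ℝ) ≤ S := by linarith
  have hSΛ : Λ ≤ S := by
    have h4 : Λ ≤ |Λ| := le_abs_self Λ
    linarith
  have ht0 : (0:ℝ) ≤ t := by
    have h1 := hMxge z₂ hz₂
    rw [htdef, hSdef]; linarith
  have htm : t ≤ S := by linarith
  have hunotin : u ∉ T := by
    intro huT
    have h1 := hE u huT
    linarith
  set ρt : U → ℝ := fun z => T.inf' hT (fun z' => ρ z' + dist z' z) with hρtdef
  have hρt_le : ∀ z' ∈ T, ∀ z : U, ρt z ≤ ρ z' + dist z' z := by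
    intro z' hz' z
    exact Finset.inf'_le _ hz'
  have hρt_eq : ∀ z ∈ T, ρt z = ρ z := by
    intro z hz
    apply le_antisymm
    · have := hρt_le z hz z
      simpa using this
    · exact Finset.le_inf' _ _ fun z' hz' => hρL z hz z' hz'
  have hρt_ge_u : S ≤ ρt u := by
    apply Finset.le_inf'
    intro z' hz'
    have h1 := hf1 z' hz'
    have h2 := hρ0 z' hz'
    have h3 : dist u z' = dist z' u := dist_comm _ _
    linarith
  set f : U → ℝ := fun z => min (t + dist u z) (S + ρt z) with hfdef
  have hfT : ∀ z ∈ T, f z = S + ρ z := by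
    intro z hz
    have h1 : S + ρt z = S + ρ z := by rw [hρt_eq z hz]
    have h2 : S + ρ z ≤ t + dist u z := by
      have := hf1 z hz
      linarith
    simp only [hfdef]
    rw [h1, min_eq_right h2]
  have hfu : f u = t := by
    simp only [hfdef]
    rw [dist_self, add_zero]
    exact min_eq_left (by linarith)
  have key : ∀ z, (z = u ∨ z ∈ T) → ∀ z', (z' = u ∨ z' ∈ T) →
      f z - f z' ≤ dist z z' ∧ dist z z' ≤ f z + f z' := by
    intro z hz z' hz'
    rcases hz with hz | hz <;> rcases hz' with hz' | hz'
    · rw [hz, hz', hfu, dist_self]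
      constructor <;> linarith
    · rw [hz, hfu, hfT z' hz']
      constructor
      · have h1 := hf1 z' hz'
        have h2 := hρ0 z' hz'
        linarith
      · have h2 := hf2 z' hz'
        linarith
    · rw [hz', hfu, hfT z hz]
      have hcomm : dist z u = dist u z := dist_comm _ _
      constructor
      · have h1 := hf1 z hz
        have h2 := hρ0 z hz
        linarith
      · have h2 := hf2 z hz
        linarith
    · rw [hfT z hz, hfT z' hz']
      constructor
      · have h1 := hρL z hz z' hz'
        have h3 : dist z' z = dist z z' := dist_comm _ _
        linarith
      · have h1 := hDm z hz z' hz'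
        have h2 := hρ0 z hz
        have h3 := hρ0 z' hz'
        linarith
  have hkat : ∀ x ∈ (↑(insert u T) : Set U), ∀ x' ∈ (↑(insert u T) : Set U),
      |f x - f x'| ≤ dist x x' ∧ dist x x' ≤ f x + f x' := by
    intro x hx x' hx'
    simp only [Finset.coe_insert, Set.mem_insert_iff, Finset.mem_coe] at hx hx'
    refine ⟨?_, (key x hx x' hx').2⟩
    rw [abs_sub_le_iff]
    refine ⟨(key x hx x' hx').1, ?_⟩
    have := (key x' hx' x hx).1
    rwa [dist_comm x' x] at this
  obtain ⟨w, hw⟩ := hU (↑(insert u T)) (Finset.finite_toSet _) f hkat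
  refine ⟨w, S, hS0, hSΛ, ?_, ?_⟩
  · intro z hz
    have : dist w z = f z := hw z (by simp [hz])
    rw [this, hfT z hz]
  · have hwu : dist w u = t := by
      have : dist w u = f u := hw u (by simp)
      rw [this, hfu]
    have h1 : dist u (g u) ≤ dist u w + dist w (g w) + dist (g w) (g u) := dist_triangle4 _ _ _ _
    have h2 : dist (g w) (g u) = dist w u := g.dist_eq w u
    have h3 : dist u w = dist w u := dist_comm _ _
    have h4 : Λ ≤ |Λ| := le_abs_self Λ
    rw [h2, h3, hwu] at h1
    linarith

end Fabricate


section Base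

variable {U : Type*} [MetricSpace U] (g : U ≃ᵢ U) (X' : Finset U) (hX : X'.Nonempty)

noncomputable def NN (b y : U) : ℝ := X'.inf' hX fun x => dist b x + dist x (g y)

noncomputable def PP (b z : U) : ℝ := X'.inf' hX fun y => dist z (g y) + dist b y

noncomputable def MM (b c : U) : ℝ := X'.inf' hX fun y => NN g X' hX b y + dist c y

variable {g X'}

lemma dG (z w : U) : dist (g z) (g w) = dist z w := g.dist_eq z w

lemma dsymm (z w : U) : dist (g.symm z) w = dist z (g w) := by
  rw [← dG (g := g) (g.symm z) w, g.apply_symm_apply]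

lemma NN_le (b y : U) {x : U} (hx : x ∈ X') : NN g X' hX b y ≤ dist b x + dist x (g y) :=
  Finset.inf'_le _ hx

lemma exists_NN (b y : U) : ∃ x ∈ X', NN g X' hX b y = dist b x + dist x (g y) :=
  Finset.exists_mem_eq_inf' hX _

lemma NN_nonneg (b y : U) : 0 ≤ NN g X' hX b y := by
  obtain ⟨x, hx, e⟩ := exists_NN (g := g) hX b y
  rw [e]; positivity

lemma dist_le_NN (b y : U) : dist b (g y) ≤ NN g X' hX b y := by
  apply Finset.le_inf'
  intro x hx
  exact dist_triangle b x (g y)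

lemma PP_le (b z : U) {y : U} (hy : y ∈ X') : PP g X' hX b z ≤ dist z (g y) + dist b y :=
  Finset.inf'_le _ hy

lemma exists_PP (b z : U) : ∃ y ∈ X', PP g X' hX b z = dist z (g y) + dist b y :=
  Finset.exists_mem_eq_inf' hX _

lemma PP_nonneg (b z : U) : 0 ≤ PP g X' hX b z := by
  obtain ⟨y, hy, e⟩ := exists_PP (g := g) hX b z
  rw [e]; positivity

lemma MM_le_NN (b c : U) {y : U} (hy : y ∈ X') : MM g X' hX b c ≤ NN g X' hX b y + dist c y :=
  Finset.inf'_le _ hy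

lemma exists_MM (b c : U) : ∃ y ∈ X', MM g X' hX b c = NN g X' hX b y + dist c y :=
  Finset.exists_mem_eq_inf' hX _

lemma MM_nonneg (b c : U) : 0 ≤ MM g X' hX b c := by
  obtain ⟨y, hy, e⟩ := exists_MM (g := g) hX b c
  rw [e]
  have h : (0:ℝ) ≤ NN g X' hX b y := NN_nonneg (g := g) hX b y
  positivity

lemma MM_le_PP (b c : U) {x : U} (hx : x ∈ X') :
    MM g X' hX b c ≤ dist b x + PP g X' hX c x := by
  obtain ⟨y, hy, e⟩ := exists_PP (g := g) hX c x
  calc MM g X' hX b c ≤ NN g X' hX b y + dist c y := MM_le_NN (g := g) hX b c hy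
    _ ≤ (dist b x + dist x (g y)) + dist c y := by
        have h : NN g X' hX b y ≤ dist b x + dist x (g y) := NN_le (g := g) hX b y hx
        linarith
    _ = dist b x + PP g X' hX c x := by rw [e]; ring

lemma exists_MM₂ (b c : U) : ∃ x ∈ X', MM g X' hX b c = dist b x + PP g X' hX c x := by
  obtain ⟨y, hy, e⟩ := exists_MM (g := g) hX b c
  obtain ⟨x, hx, e2⟩ := exists_NN (g := g) hX b y
  refine ⟨x, hx, le_antisymm (MM_le_PP (g := g) hX b c hx) ?_⟩
  have h1 : PP g X' hX c x ≤ dist x (g y) + dist c y := PP_le (g := g) hX c x hy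
  rw [e, e2]; linarith

section Lip

lemma NN_lip_pt (b : U) (y y' : U) : NN g X' hX b y ≤ NN g X' hX b y' + dist (g y') (g y) := by
  obtain ⟨x, hx, e⟩ := exists_NN (g := g) hX b y'
  have h1 : NN g X' hX b y ≤ dist b x + dist x (g y) := NN_le (g := g) hX b y hx
  have h2 : dist x (g y) ≤ dist x (g y') + dist (g y') (g y) := dist_triangle _ _ _
  rw [e]; linarith

lemma NN_lip_a (b b' y : U) : NN g X' hX b y ≤ NN g X' hX b' y + dist b b' := by
  obtain ⟨x, hx, e⟩ := exists_NN (g := g) hX b' y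
  have h1 : NN g X' hX b y ≤ dist b x + dist x (g y) := NN_le (g := g) hX b y hx
  have h2 : dist b x ≤ dist b b' + dist b' x := dist_triangle _ _ _
  rw [e]; linarith

lemma PP_lip_pt (b : U) (z z' : U) : PP g X' hX b z ≤ PP g X' hX b z' + dist z' z := by
  obtain ⟨y, hy, e⟩ := exists_PP (g := g) hX b z'
  have h1 : PP g X' hX b z ≤ dist z (g y) + dist b y := PP_le (g := g) hX b z hy
  have h2 : dist z (g y) ≤ dist z z' + dist z' (g y) := dist_triangle _ _ _
  rw [e, dist_comm z' z]; linarith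

lemma PP_lip_a (b b' z : U) : PP g X' hX b z ≤ PP g X' hX b' z + dist b b' := by
  obtain ⟨y, hy, e⟩ := exists_PP (g := g) hX b' z
  have h1 : PP g X' hX b z ≤ dist z (g y) + dist b y := PP_le (g := g) hX b z hy
  have h2 : dist b y ≤ dist b b' + dist b' y := dist_triangle _ _ _
  rw [e]; linarith

lemma MM_lip_1 (b b' c : U) : MM g X' hX b c ≤ MM g X' hX b' c + dist b b' := by
  obtain ⟨y, hy, e⟩ := exists_MM (g := g) hX b' c
  have h1 : MM g X' hX b c ≤ NN g X' hX b y + dist c y := MM_le_NN (g := g) hX b c hy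
  have h2 : NN g X' hX b y ≤ NN g X' hX b' y + dist b b' := NN_lip_a (g := g) hX b b' y
  rw [e]; linarith

lemma MM_lip_2 (b c c' : U) : MM g X' hX b c ≤ MM g X' hX b c' + dist c c' := by
  obtain ⟨y, hy, e⟩ := exists_MM (g := g) hX b c'
  have h1 : MM g X' hX b c ≤ NN g X' hX b y + dist c y := MM_le_NN (g := g) hX b c hy
  have h2 : dist c y ≤ dist c c' + dist c' y := dist_triangle _ _ _
  rw [e]; linarith

end Lip


section Extra

lemma alpha_le_NN (b x x' : U) (hx' : x' ∈ X') :
    dist b x ≤ NN g X' hX b x' + dist (g x') x := by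
  obtain ⟨z, hz, e⟩ := exists_NN (g := g) hX b x'
  have h1 : dist b x ≤ dist b z + dist z x := dist_triangle _ _ _
  have h2 : dist z x ≤ dist z (g x') + dist (g x') x := dist_triangle _ _ _
  rw [e]; linarith

lemma alpha_le_PP (b x x' : U) (hx' : x' ∈ X') :
    dist b x ≤ PP g X' hX b x' + dist x' (g x) := by
  obtain ⟨y, hy, e⟩ := exists_PP (g := g) hX b x'
  have h1 : dist b x ≤ dist b y + dist y x := dist_triangle _ _ _
  have h2 : dist y x = dist (g y) (g x) := (dG (g := g) y x).symm
  have h3 : dist (g y) (g x) ≤ dist (g y) x' + dist x' (g x) := dist_triangle _ _ _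
  have h4 : dist (g y) x' = dist x' (g y) := dist_comm _ _
  rw [e]; linarith

lemma PP_add_PP_ge (c z z' : U) : dist z z' ≤ PP g X' hX c z + PP g X' hX c z' := by
  obtain ⟨y, hy, e⟩ := exists_PP (g := g) hX c z
  obtain ⟨y', hy', e'⟩ := exists_PP (g := g) hX c z'
  have h1 : dist z z' ≤ dist z (g y) + dist (g y) (g y') + dist (g y') z' := dist_triangle4 _ _ _ _
  have h2 : dist (g y) (g y') = dist y y' := dG y y'
  have h3 : dist y y' ≤ dist c y + dist c y' := dist_triangle_left _ _ _
  have h4 : dist (g y') z' = dist z' (g y') := dist_comm _ _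
  rw [e, e']; linarith

lemma NN_add_NN_ge (b c x : U) (hx : x ∈ X') :
    dist b c ≤ NN g X' hX b x + NN g X' hX c x := by
  obtain ⟨z, hz, e⟩ := exists_NN (g := g) hX b x
  obtain ⟨z', hz', e'⟩ := exists_NN (g := g) hX c x
  have h1 : dist b c ≤ dist b z + dist z z' + dist z' c := dist_triangle4 _ _ _ _
  have h2 : dist z z' ≤ dist z (g x) + dist z' (g x) := dist_triangle_right _ _ _
  have h3 : dist z' c = dist c z' := dist_comm _ _
  rw [e, e']; linarith

lemma NN_sum_two (e' y y' : U) : dist y y' ≤ NN g X' hX e' y + NN g X' hX e' y' := by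
  obtain ⟨z, hz, e1⟩ := exists_NN (g := g) hX e' y
  obtain ⟨z', hz', e2⟩ := exists_NN (g := g) hX e' y'
  have h0 : dist y y' = dist (g y) (g y') := (dG y y').symm
  have h1 : dist (g y) (g y') ≤ dist (g y) z + dist z z' + dist z' (g y') := dist_triangle4 _ _ _ _
  have h2 : dist z z' ≤ dist e' z + dist e' z' := dist_triangle_left _ _ _
  have h3 : dist (g y) z = dist z (g y) := dist_comm _ _
  rw [e1, e2]; linarith

lemma dist_le_MM_add_PP (b c x : U) : dist b x ≤ MM g X' hX b c + PP g X' hX c x := by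
  obtain ⟨x', hx', e⟩ := exists_MM₂ (g := g) hX b c
  have h1 : dist b x ≤ dist b x' + dist x' x := dist_triangle _ _ _
  have h2 : dist x' x ≤ PP g X' hX c x' + PP g X' hX c x := PP_add_PP_ge (g := g) hX c x' x
  rw [e]; linarith

lemma dist_le_MM_add_NN (b c x : U) : dist b x ≤ MM g X' hX c b + NN g X' hX c x := by
  obtain ⟨y, hy, e⟩ := exists_MM (g := g) hX c b
  obtain ⟨z, hz, e2⟩ := exists_NN (g := g) hX c x
  have h1 : dist b x ≤ dist b y + dist y x := dist_triangle _ _ _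
  have h2 : dist y x = dist (g y) (g x) := (dG y x).symm
  have h3 : dist (g y) (g x) ≤ dist (g y) c + dist c z + dist z (g x) := dist_triangle4 _ _ _ _
  have h4 : dist (g y) c = dist c (g y) := dist_comm _ _
  have h5 : dist c (g y) ≤ NN g X' hX c y := dist_le_NN (g := g) hX c y
  rw [e, e2]; linarith

lemma NN_le_MM_add (b c x : U) : NN g X' hX b x ≤ MM g X' hX b c + dist c x := by
  obtain ⟨y, hy, e⟩ := exists_MM (g := g) hX b c
  have h1 : NN g X' hX b x ≤ NN g X' hX b y + dist (g y) (g x) := NN_lip_pt (g := g) hX b x y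
  have h2 : dist (g y) (g x) = dist y x := dG y x
  have h3 : dist y x ≤ dist y c + dist c x := dist_triangle _ _ _
  have h4 : dist y c = dist c y := dist_comm _ _
  rw [e]; linarith

lemma PP_le_MM_add (b c x : U) : PP g X' hX b x ≤ MM g X' hX c b + dist c x := by
  obtain ⟨x', hx', e⟩ := exists_MM₂ (g := g) hX c b
  have h1 : PP g X' hX b x ≤ PP g X' hX b x' + dist x' x := PP_lip_pt (g := g) hX b x x'
  have h2 : dist x' x ≤ dist x' c + dist c x := dist_triangle _ _ _
  have h3 : dist x' c = dist c x' := dist_comm _ _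
  rw [e]; linarith

lemma dist_le_MM_add_MM (b c e' : U) : dist b c ≤ MM g X' hX b e' + MM g X' hX c e' := by
  obtain ⟨x₁, hx₁, e1⟩ := exists_MM₂ (g := g) hX b e'
  obtain ⟨x₂, hx₂, e2⟩ := exists_MM₂ (g := g) hX c e'
  have h1 : dist b c ≤ dist b x₁ + dist x₁ x₂ + dist x₂ c := dist_triangle4 _ _ _ _
  have h2 : dist x₁ x₂ ≤ PP g X' hX e' x₁ + PP g X' hX e' x₂ := PP_add_PP_ge (g := g) hX e' x₁ x₂
  have h3 : dist x₂ c = dist c x₂ := dist_comm _ _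
  rw [e1, e2]; linarith

lemma dist_le_MM_add_MM' (b c e' : U) : dist b c ≤ MM g X' hX e' b + MM g X' hX e' c := by
  obtain ⟨y₁, hy₁, e1⟩ := exists_MM (g := g) hX e' b
  obtain ⟨y₂, hy₂, e2⟩ := exists_MM (g := g) hX e' c
  have h1 : dist b c ≤ dist b y₁ + dist y₁ y₂ + dist y₂ c := dist_triangle4 _ _ _ _
  have h2 : dist y₁ y₂ ≤ NN g X' hX e' y₁ + NN g X' hX e' y₂ := NN_sum_two (g := g) hX e' y₁ y₂
  have h3 : dist y₂ c = dist c y₂ := dist_comm _ _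
  rw [e1, e2]; linarith

lemma dist_le_PP_add_PP (b c x : U) : dist b c ≤ PP g X' hX b x + PP g X' hX c x := by
  obtain ⟨y, hy, e⟩ := exists_PP (g := g) hX b x
  obtain ⟨y', hy', e'⟩ := exists_PP (g := g) hX c x
  have h1 : dist b c ≤ dist b y + dist y y' + dist y' c := dist_triangle4 _ _ _ _
  have h2 : dist y y' = dist (g y) (g y') := (dG y y').symm
  have h3 : dist (g y) (g y') ≤ dist (g y) x + dist x (g y') := dist_triangle _ _ _
  have h4 : dist (g y) x = dist x (g y) := dist_comm _ _
  have h5 : dist y' c = dist c y' := dist_comm _ _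
  rw [e, e']; linarith

end Extra

end Base


section StepDefs

variable {U : Type*} [MetricSpace U]

/-- Node index for the witness profile. -/
def Nodes (U : Type*) (X' : Finset U) (n : ℕ) :=
  ({x // x ∈ X'} ⊕ {x // x ∈ X'} ⊕ {x // x ∈ X'}) ⊕ (Fin n ⊕ Fin n ⊕ Fin n)

instance (X' : Finset U) (n : ℕ) : Fintype (Nodes U X' n) := by
  unfold Nodes; infer_instance

def npt (g : U ≃ᵢ U) (X' : Finset U) {n : ℕ} (p : Fin n → U) : Nodes U X' n → U
  | .inl (.inl x) => x
  | .inl (.inr (.inl x)) => g x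
  | .inl (.inr (.inr x)) => g.symm x
  | .inr (.inl j) => p j
  | .inr (.inr (.inl j)) => g (p j)
  | .inr (.inr (.inr j)) => g.symm (p j)

noncomputable def nval (g : U ≃ᵢ U) (X' : Finset U) (hX : X'.Nonempty) (b : U)
    {n : ℕ} (a : Fin n → U) : Nodes U X' n → ℝ
  | .inl (.inl x) => dist b x
  | .inl (.inr (.inl x)) => NN g X' hX b x
  | .inl (.inr (.inr x)) => PP g X' hX b x
  | .inr (.inl j) => dist b (a j)
  | .inr (.inr (.inl j)) => MM g X' hX b (a j)
  | .inr (.inr (.inr j)) => MM g X' hX (a j) b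

variable {g : U ≃ᵢ U} {X' : Finset U} (hX : X'.Nonempty)

lemma key36 {n : ℕ} (a p : Fin n → U) (b : U)
    (I1 : ∀ i, ∀ x ∈ X', dist (p i) x = dist (a i) x)
    (I2 : ∀ i, ∀ x ∈ X', dist (p i) (g x) = NN g X' hX (a i) x)
    (I3 : ∀ i, ∀ x ∈ X', dist (p i) (g.symm x) = PP g X' hX (a i) x)
    (I4 : ∀ i j, dist (p i) (p j) = dist (a i) (a j))
    (I5 : ∀ i j, dist (p i) (g (p j)) = MM g X' hX (a i) (a j)) :
    ∀ ν ν' : Nodes U X' n,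
      nval g X' hX b a ν ≤ nval g X' hX b a ν' + dist (npt g X' p ν') (npt g X' p ν) := by

  intro ν ν'
  have dsy : ∀ z w : U, dist (g.symm z) w = dist z (g w) := fun z w => dsymm z w
  have dgg : ∀ z w : U, dist (g z) (g w) = dist z w := fun z w => dG z w
  have dss : ∀ z w : U, dist (g.symm z) (g.symm w) = dist z w := fun z w => g.symm.dist_eq z w
  rcases ν' with (x' | x' | x') | (j' | j' | j') <;>
    rcases ν with (x | x | x) | (j | j | j) <;>
      simp only [nval, npt]
  -- ν' = X0
  · exact dist_triangle b x' x
  · exact NN_le (g := g) hX b x x'.2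
  · have e : dist (x' : U) (g.symm x) = dist (x : U) (g x') := by
      rw [dist_comm, dsy]
    have h := PP_le (g := g) hX b (x : U) x'.2
    rw [e]; linarith
  · have e : dist (x' : U) (p j) = dist (a j) x' := by
      rw [dist_comm]; exact I1 j x' x'.2
    have h := dist_triangle b (x' : U) (a j)
    have h2 : dist (x' : U) (a j) = dist (a j) x' := dist_comm _ _
    rw [e]; linarith
  · have e : dist (x' : U) (g (p j)) = PP g X' hX (a j) x' := by
      rw [← dsy, dist_comm]; exact I3 j x' x'.2
    have h := MM_le_PP (g := g) hX b (a j) x'.2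
    rw [e]; linarith
  · have e : dist (x' : U) (g.symm (p j)) = NN g X' hX (a j) x' := by
      rw [dist_comm, dsy]; exact I2 j x' x'.2
    have h := MM_le_NN (g := g) hX (a j) b x'.2
    rw [e]; linarith
  -- ν' = X1
  · exact alpha_le_NN (g := g) hX b x x' x'.2
  · exact NN_lip_pt (g := g) hX b x x'
  · obtain ⟨z, hz, e⟩ := exists_NN (g := g) hX b x'
    have h1 : PP g X' hX b x ≤ dist (x : U) (g z) + dist b z := PP_le (g := g) hX b (x : U) hz
    have h2 : dist (x : U) (g z) = dist (g.symm x) z := (dsy (x : U) z).symm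
    have h3 : dist (g.symm (x : U)) z ≤ dist (g.symm x) (g x') + dist (g x') z := dist_triangle _ _ _
    have h4 : dist (g.symm (x : U)) (g x') = dist (g x') (g.symm x) := dist_comm _ _
    have h5 : dist (g (x' : U)) z = dist z (g x') := dist_comm _ _
    rw [e]; linarith
  · have e : dist (g (x' : U)) (p j) = NN g X' hX (a j) x' := by
      rw [dist_comm]; exact I2 j x' x'.2
    have h := NN_add_NN_ge (g := g) hX b (a j) x' x'.2
    rw [e]; linarith
  · have e : dist (g (x' : U)) (g (p j)) = dist (a j) x' := by
      rw [dgg, dist_comm]; exact I1 j x' x'.2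
    have h := MM_le_NN (g := g) hX b (a j) x'.2
    rw [e]; linarith
  · obtain ⟨z, hz, e⟩ := exists_NN (g := g) hX b x'
    have h1 : dist z (g.symm (p j)) ≤ dist z (g x') + dist (g x') (g.symm (p j)) := dist_triangle _ _ _
    have h2 : dist z (g.symm (p j)) = NN g X' hX (a j) z := by
      rw [dist_comm, dsy]; exact I2 j z hz
    have h3 : MM g X' hX (a j) b ≤ NN g X' hX (a j) z + dist b z := MM_le_NN (g := g) hX (a j) b hz
    rw [e]; linarith
  -- ν' = X2
  · have e : dist (g.symm (x' : U)) x = dist (x' : U) (g x) := dsy x' x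
    have h := alpha_le_PP (g := g) hX b x x' x'.2
    rw [e]; linarith
  · obtain ⟨y, hy, e⟩ := exists_PP (g := g) hX b x'
    have h1 : dist y (g x) ≤ dist y (g.symm x') + dist (g.symm x') (g x) := dist_triangle _ _ _
    have h2 : dist y (g.symm (x' : U)) = dist (x' : U) (g y) := by rw [dist_comm, dsy]
    have h3 : NN g X' hX b x ≤ dist b y + dist y (g x) := by
      have := NN_le (g := g) hX b (x : U) hy; linarith
    rw [e]; linarith
  · have e : dist (g.symm (x' : U)) (g.symm x) = dist (x' : U) x := dss x' x
    have h := PP_lip_pt (g := g) hX b x x'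
    rw [e]; linarith
  · have e : dist (g.symm (x' : U)) (p j) = PP g X' hX (a j) x' := by
      rw [dist_comm]; exact I3 j x' x'.2
    have h := dist_le_PP_add_PP (g := g) hX b (a j) x'
    rw [e]; linarith
  · obtain ⟨y, hy, e⟩ := exists_PP (g := g) hX b x'
    have h1 : dist y (g (p j)) ≤ dist y (g.symm x') + dist (g.symm x') (g (p j)) := dist_triangle _ _ _
    have h2 : dist y (g.symm (x' : U)) = dist (x' : U) (g y) := by rw [dist_comm, dsy]
    have h3 : dist y (g (p j)) = PP g X' hX (a j) y := by
      rw [← dsy, dist_comm]; exact I3 j y hy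
    have h4 : MM g X' hX b (a j) ≤ dist b y + PP g X' hX (a j) y := MM_le_PP (g := g) hX b (a j) hy
    rw [e]; linarith
  · have e : dist (g.symm (x' : U)) (g.symm (p j)) = dist (a j) x' := by
      rw [dss, dist_comm]; exact I1 j x' x'.2
    have h := MM_le_PP (g := g) hX (a j) b x'.2
    rw [e]; linarith
  -- ν' = P0
  · have e : dist (p j') x = dist (a j') x := I1 j' x x.2
    have h := dist_triangle b (a j') (x : U)
    have h2 : dist b (a j') = dist b (a j') := rfl
    rw [e]; linarith
  · have e : dist (p j') (g x) = NN g X' hX (a j') x := I2 j' x x.2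
    have h := NN_lip_a (g := g) hX b (a j') (x : U)
    rw [e]; linarith
  · have e : dist (p j') (g.symm x) = PP g X' hX (a j') x := I3 j' x x.2
    have h := PP_lip_a (g := g) hX b (a j') (x : U)
    rw [e]; linarith
  · have e : dist (p j') (p j) = dist (a j') (a j) := I4 j' j
    have h := dist_triangle b (a j') (a j)
    rw [e]; linarith
  · have e : dist (p j') (g (p j)) = MM g X' hX (a j') (a j) := I5 j' j
    have h := MM_lip_1 (g := g) hX b (a j') (a j)
    rw [e]; linarith
  · have e : dist (p j') (g.symm (p j)) = MM g X' hX (a j) (a j') := by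
      rw [dist_comm, dsy]; exact I5 j j'
    have h := MM_lip_2 (g := g) hX (a j) b (a j')
    have h2 : dist b (a j') = dist (a j') b := dist_comm _ _
    rw [e]; linarith
  -- ν' = P1
  · have e : dist (g (p j')) x = PP g X' hX (a j') x := by
      rw [dist_comm, ← dsy, dist_comm]; exact I3 j' x x.2
    have h := dist_le_MM_add_PP (g := g) hX b (a j') (x : U)
    rw [e]; linarith
  · have e : dist (g (p j')) (g x) = dist (a j') x := by
      rw [dgg]; exact I1 j' x x.2
    have h := NN_le_MM_add (g := g) hX b (a j') (x : U)
    rw [e]; linarith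
  · obtain ⟨z, hz, e⟩ := exists_MM₂ (g := g) hX b (a j')
    have h1 : dist z (g.symm x) ≤ dist z (g (p j')) + dist (g (p j')) (g.symm x) := dist_triangle _ _ _
    have h2 : dist z (g (p j')) = PP g X' hX (a j') z := by
      rw [← dsy, dist_comm]; exact I3 j' z hz
    have h3 : dist z (g.symm (x : U)) = dist (x : U) (g z) := by rw [dist_comm, dsy]
    have h4 : PP g X' hX b x ≤ dist (x : U) (g z) + dist b z := PP_le (g := g) hX b (x : U) hz
    rw [e]; linarith
  · have e : dist (g (p j')) (p j) = MM g X' hX (a j) (a j') := by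
      rw [dist_comm]; exact I5 j j'
    have h := dist_le_MM_add_MM (g := g) hX b (a j) (a j')
    rw [e]; linarith
  · have e : dist (g (p j')) (g (p j)) = dist (a j') (a j) := by
      rw [dgg]; exact I4 j' j
    have h := MM_lip_2 (g := g) hX b (a j) (a j')
    have h2 : dist (a j) (a j') = dist (a j') (a j) := dist_comm _ _
    rw [e]; linarith
  · obtain ⟨z, hz, e⟩ := exists_MM₂ (g := g) hX b (a j')
    have h1 : dist z (g.symm (p j)) ≤ dist z (g (p j')) + dist (g (p j')) (g.symm (p j)) := dist_triangle _ _ _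
    have h2 : dist z (g (p j')) = PP g X' hX (a j') z := by
      rw [← dsy, dist_comm]; exact I3 j' z hz
    have h3 : dist z (g.symm (p j)) = NN g X' hX (a j) z := by
      rw [dist_comm, dsy]; exact I2 j z hz
    have h4 : MM g X' hX (a j) b ≤ NN g X' hX (a j) z + dist b z := MM_le_NN (g := g) hX (a j) b hz
    rw [e]; linarith
  -- ν' = P2
  · have e : dist (g.symm (p j')) x = NN g X' hX (a j') x := by
      rw [dsy]; exact I2 j' x x.2
    have h := dist_le_MM_add_NN (g := g) hX b (a j') (x : U)
    rw [e]; linarith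
  · obtain ⟨y, hy, e⟩ := exists_MM (g := g) hX (a j') b
    have h1 : dist y (g x) ≤ dist y (g.symm (p j')) + dist (g.symm (p j')) (g x) := dist_triangle _ _ _
    have h2 : dist y (g.symm (p j')) = NN g X' hX (a j') y := by
      rw [dist_comm, dsy]; exact I2 j' y hy
    have h3 : NN g X' hX b x ≤ dist b y + dist y (g x) := by
      have := NN_le (g := g) hX b (x : U) hy; linarith
    rw [e]; linarith
  · have e : dist (g.symm (p j')) (g.symm x) = dist (a j') x := by
      rw [dss]; exact I1 j' x x.2
    have h := PP_le_MM_add (g := g) hX b (a j') (x : U)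
    rw [e]; linarith
  · have e : dist (g.symm (p j')) (p j) = MM g X' hX (a j') (a j) := by
      rw [dsy]; exact I5 j' j
    have h := dist_le_MM_add_MM' (g := g) hX b (a j) (a j')
    rw [e]; linarith
  · obtain ⟨y, hy, e⟩ := exists_MM (g := g) hX (a j') b
    have h1 : dist y (g (p j)) ≤ dist y (g.symm (p j')) + dist (g.symm (p j')) (g (p j)) := dist_triangle _ _ _
    have h2 : dist y (g.symm (p j')) = NN g X' hX (a j') y := by
      rw [dist_comm, dsy]; exact I2 j' y hy
    have h3 : dist y (g (p j)) = PP g X' hX (a j) y := by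
      rw [← dsy, dist_comm]; exact I3 j y hy
    have h4 : MM g X' hX b (a j) ≤ dist b y + PP g X' hX (a j) y := MM_le_PP (g := g) hX b (a j) hy
    rw [e]; linarith
  · have e : dist (g.symm (p j')) (g.symm (p j)) = dist (a j') (a j) := by
      rw [dss]; exact I4 j' j
    have h := MM_lip_1 (g := g) hX (a j) (a j') b
    have h2 : dist (a j) (a j') = dist (a j') (a j) := dist_comm _ _
    rw [e]; linarith

end StepDefs

section StepLemma

variable {U : Type*} [MetricSpace U]

def Anc (U : Type*) (X' : Finset U) (n : ℕ) := ({x // x ∈ X'} ⊕ Fin n) ⊕ Bool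

instance (X' : Finset U) (n : ℕ) : Fintype (Anc U X' n) := by
  unfold Anc; infer_instance

def apt (g : U ≃ᵢ U) (X' : Finset U) {n : ℕ} (p : Fin n → U) (w : U) : Anc U X' n → U
  | .inl (.inl x) => x
  | .inl (.inr j) => p j
  | .inr false => w
  | .inr true => g.symm w

noncomputable def aval (g : U ≃ᵢ U) (X' : Finset U) (hX : X'.Nonempty) (b : U)
    {n : ℕ} (a : Fin n → U) (S : ℝ) : Anc U X' n → ℝ
  | .inl (.inl x) => dist b x
  | .inl (.inr j) => dist b (a j)
  | .inr false => S
  | .inr true => S + MM g X' hX b b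

variable {g : U ≃ᵢ U} {X' : Finset U} (hX : X'.Nonempty)

lemma step (hU : FinitelyInjective U) (hg : IsUnbounded g)
    {n : ℕ} (a p : Fin n → U)
    (I1 : ∀ i, ∀ x ∈ X', dist (p i) x = dist (a i) x)
    (I2 : ∀ i, ∀ x ∈ X', dist (p i) (g x) = NN g X' hX (a i) x)
    (I3 : ∀ i, ∀ x ∈ X', dist (p i) (g.symm x) = PP g X' hX (a i) x)
    (I4 : ∀ i j, dist (p i) (p j) = dist (a i) (a j))
    (I5 : ∀ i j, dist (p i) (g (p j)) = MM g X' hX (a i) (a j))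
    (b : U) :
    ∃ q : U,
      (∀ x ∈ X', dist q x = dist b x) ∧
      (∀ x ∈ X', dist q (g x) = NN g X' hX b x) ∧
      (∀ x ∈ X', dist q (g.symm x) = PP g X' hX b x) ∧
      (∀ j, dist q (p j) = dist b (a j)) ∧
      (∀ j, dist q (g (p j)) = MM g X' hX b (a j)) ∧
      (∀ j, dist q (g.symm (p j)) = MM g X' hX (a j) b) ∧
      dist q (g q) = MM g X' hX b b := by
  classical
  have dsy : ∀ z w : U, dist (g.symm z) w = dist z (g w) := fun z w => dsymm z w
  have dgg : ∀ z w : U, dist (g z) (g w) = dist z w := fun z w => dG z w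
  have dss : ∀ z w : U, dist (g.symm z) (g.symm w) = dist z w := fun z w => g.symm.dist_eq z w
  have hX' := hX
  obtain ⟨x₀, hx₀⟩ := hX'
  set μ := MM g X' hX b b with hμdef
  have hμ0 : 0 ≤ μ := MM_nonneg (g := g) hX b b
  -- a bound on the relevant distances from b
  set C0 : ℝ := X'.sup' hX (fun x => dist b x) + (∑ j : Fin n, dist b (a j)) + 1 with hC0def
  have hsum0 : (0:ℝ) ≤ ∑ j : Fin n, dist b (a j) :=
    Finset.sum_nonneg fun j _ => dist_nonneg
  have hsup0 : (0:ℝ) ≤ X'.sup' hX (fun x => dist b x) :=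
    le_trans dist_nonneg (Finset.le_sup' (fun x => dist b x) hx₀)
  have hC0x : ∀ x ∈ X', dist b x ≤ C0 := by
    intro x hx
    have := Finset.le_sup' (fun x => dist b x) hx
    simp only [hC0def]; linarith
  have hC0j : ∀ j, dist b (a j) ≤ C0 := by
    intro j
    have := Finset.single_le_sum (f := fun j => dist b (a j))
      (fun i _ => dist_nonneg) (Finset.mem_univ j)
    simp only [hC0def]; linarith
  have hC00 : (0:ℝ) ≤ C0 := by simp only [hC0def]; linarith
  -- fabricate the witness
  have hne : (Finset.univ : Finset (Nodes U X' n)).Nonempty :=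
    ⟨Sum.inl (Sum.inl ⟨x₀, hx₀⟩), Finset.mem_univ _⟩
  set ρ : U → ℝ := fun z => (Finset.univ : Finset (Nodes U X' n)).inf' hne
    (fun ν => nval g X' hX b a ν + dist (npt g X' p ν) z) with hρdef
  have hval0 : ∀ ν : Nodes U X' n, 0 ≤ nval g X' hX b a ν := by
    intro ν
    rcases ν with (x | x | x) | (j | j | j) <;> simp only [nval]
    · exact dist_nonneg
    · exact NN_nonneg (g := g) hX b x
    · exact PP_nonneg (g := g) hX b x
    · exact dist_nonneg
    · exact MM_nonneg (g := g) hX b (a j)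
    · exact MM_nonneg (g := g) hX (a j) b
  have hρ_le : ∀ (ν : Nodes U X' n) (z : U),
      ρ z ≤ nval g X' hX b a ν + dist (npt g X' p ν) z := by
    intro ν z
    exact Finset.inf'_le _ (Finset.mem_univ ν)
  have hρ_pt : ∀ ν : Nodes U X' n, ρ (npt g X' p ν) = nval g X' hX b a ν := by
    intro ν
    apply le_antisymm
    · have := hρ_le ν (npt g X' p ν)
      simpa using this
    · apply Finset.le_inf'
      intro ν' _
      exact key36 hX a p b I1 I2 I3 I4 I5 ν ν'
  have hρ_0 : ∀ z ∈ Finset.image (npt g X' p) Finset.univ, 0 ≤ ρ z := by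
    intro z _
    apply Finset.le_inf'
    intro ν _
    have := hval0 ν
    have : (0:ℝ) ≤ dist (npt g X' p ν) z := dist_nonneg
    positivity
  have hρ_L : ∀ z ∈ Finset.image (npt g X' p) Finset.univ,
      ∀ z' ∈ Finset.image (npt g X' p) Finset.univ, ρ z ≤ ρ z' + dist z' z := by
    intro z _ z' _
    obtain ⟨ν, _, e⟩ := Finset.exists_mem_eq_inf' hne
      (fun ν => nval g X' hX b a ν + dist (npt g X' p ν) z')
    have h1 := hρ_le ν z
    have h2 : dist (npt g X' p ν) z ≤ dist (npt g X' p ν) z' + dist z' z := dist_triangle _ _ _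
    have e' : ρ z' = nval g X' hX b a ν + dist (npt g X' p ν) z' := e
    linarith
  have hTne : (Finset.image (npt g X' p) Finset.univ).Nonempty :=
    ⟨npt g X' p (Sum.inl (Sum.inl ⟨x₀, hx₀⟩)),
      Finset.mem_image_of_mem _ (Finset.mem_univ _)⟩
  obtain ⟨w, S, hS0, hSΛ, hwz, hwgw⟩ := fabricate hU g hg _ hTne ρ hρ_0 hρ_L (μ + C0)
  have hw : ∀ ν : Nodes U X' n, dist w (npt g X' p ν) = S + nval g X' hX b a ν := by
    intro ν
    rw [hwz (npt g X' p ν) (Finset.mem_image_of_mem _ (Finset.mem_univ ν)), hρ_pt ν]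
  -- specialized witness distances
  have hwx : ∀ x : {x // x ∈ X'}, dist w (x : U) = S + dist b x := by
    intro x
    have := hw (Sum.inl (Sum.inl x))
    simpa [npt, nval] using this
  have hwgx : ∀ x : {x // x ∈ X'}, dist w (g x) = S + NN g X' hX b x := by
    intro x
    have := hw (Sum.inl (Sum.inr (Sum.inl x)))
    simpa [npt, nval] using this
  have hwsx : ∀ x : {x // x ∈ X'}, dist w (g.symm x) = S + PP g X' hX b x := by
    intro x
    have := hw (Sum.inl (Sum.inr (Sum.inr x)))
    simpa [npt, nval] using this
  have hwp : ∀ j, dist w (p j) = S + dist b (a j) := by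
    intro j
    have := hw (Sum.inr (Sum.inl j))
    simpa [npt, nval] using this
  have hwgp : ∀ j, dist w (g (p j)) = S + MM g X' hX b (a j) := by
    intro j
    have := hw (Sum.inr (Sum.inr (Sum.inl j)))
    simpa [npt, nval] using this
  have hwsp : ∀ j, dist w (g.symm (p j)) = S + MM g X' hX (a j) b := by
    intro j
    have := hw (Sum.inr (Sum.inr (Sum.inr j)))
    simpa [npt, nval] using this
  have hdisp : μ + C0 ≤ dist w (g w) := hwgw
  have hdisp2 : dist w (g.symm w) = dist w (g w) := by
    rw [← dsy w w, dist_comm]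
  have hdisp_ub : dist w (g w) ≤ 2*S + μ := by
    obtain ⟨y, hy, e1⟩ := exists_MM (g := g) hX b b
    obtain ⟨z, hz, e2⟩ := exists_NN (g := g) hX b y
    have h1 : dist w (g w) ≤ dist w z + dist z (g y) + dist (g y) (g w) := dist_triangle4 _ _ _ _
    have h2 : dist w z = S + dist b z := hwx ⟨z, hz⟩
    have h3 : dist (g y) (g w) = dist y w := dgg y w
    have h4 : dist y w = dist w y := dist_comm _ _
    have h5 : dist w y = S + dist b y := hwx ⟨y, hy⟩
    have : μ = dist b z + dist z (g y) + dist b y := by rw [hμdef, e1, e2]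
    linarith
  have hSb : ∀ x ∈ X', dist b x ≤ S := fun x hx => le_trans (hC0x x hx) (by linarith)
  have hSj : ∀ j, dist b (a j) ≤ S := fun j => le_trans (hC0j j) (by linarith)
  -- anchor noundercut
  have hAne : (Finset.univ : Finset (Anc U X' n)).Nonempty :=
    ⟨Sum.inl (Sum.inl ⟨x₀, hx₀⟩), Finset.mem_univ _⟩
  have keyA : ∀ κ κ' : Anc U X' n,
      aval g X' hX b a S κ ≤ aval g X' hX b a S κ' +
        dist (apt g X' p w κ') (apt g X' p w κ) := by
    intro κ κ'
    rcases κ' with (x' | j') | (_ | _) <;> rcases κ with (x | j) | (_ | _) <;>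
      simp only [aval, apt]
    · exact dist_triangle b x' x
    · have e : dist (x' : U) (p j) = dist (a j) x' := by
        rw [dist_comm]; exact I1 j x' x'.2
      have h1 := dist_triangle b (a j) (x' : U)
      have h2 : dist b (a j) ≤ dist b (x' : U) + dist (x' : U) (a j) := dist_triangle _ _ _
      have h3 : dist (x' : U) (a j) = dist (a j) (x' : U) := dist_comm _ _
      rw [e]; linarith
    · have e : dist (x' : U) w = S + dist b x' := by rw [dist_comm]; exact hwx x'
      have := dist_nonneg (x := b) (y := (x' : U))
      rw [e]; linarith
    · have e : dist (x' : U) (g.symm w) = dist w (g x') := by rw [dist_comm, dsy, dist_comm]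
      have h1 : dist w (g (x' : U)) = S + NN g X' hX b x' := hwgx x'
      have h2 : μ ≤ NN g X' hX b x' + dist b x' := MM_le_NN (g := g) hX b b x'.2
      rw [e, h1]; linarith
    · have e : dist (p j') x = dist (a j') x := I1 j' x x.2
      have h1 : dist b x ≤ dist b (a j') + dist (a j') (x : U) := dist_triangle _ _ _
      rw [e]; linarith
    · have e : dist (p j') (p j) = dist (a j') (a j) := I4 j' j
      have h1 : dist b (a j) ≤ dist b (a j') + dist (a j') (a j) := dist_triangle _ _ _
      rw [e]; linarith
    · have e : dist (p j') w = S + dist b (a j') := by rw [dist_comm]; exact hwp j'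
      have := dist_nonneg (x := b) (y := a j')
      rw [e]; linarith
    · have e : dist (p j') (g.symm w) = dist w (g (p j')) := by rw [dist_comm, dsy, dist_comm]
      have h1 := hwgp j'
      have h2 : μ ≤ MM g X' hX b (a j') + dist b (a j') := MM_lip_2 (g := g) hX b b (a j')
      rw [e, h1]; linarith
    · have e : dist w (x : U) = S + dist b x := hwx x
      rw [e]; linarith [dist_nonneg (x := b) (y := (x : U))]
    · have e : dist w (p j) = S + dist b (a j) := hwp j
      rw [e]; linarith [dist_nonneg (x := b) (y := a j)]
    · simp
    · have h1 : μ ≤ dist w (g.symm w) := by rw [hdisp2]; linarith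
      linarith
    · have e : dist (g.symm w) (x : U) = dist w (g x) := by rw [dist_comm, ← dsy, dist_comm]
      have h1 := hwgx x
      have h2 := hSb x x.2
      have h3 := NN_nonneg (g := g) hX b (x : U)
      rw [e, h1]; linarith
    · have e : dist (g.symm w) (p j) = dist w (g (p j)) := by rw [dist_comm, ← dsy, dist_comm]
      have h1 := hwgp j
      have h2 := hSj j
      have h3 := MM_nonneg (g := g) hX b (a j)
      rw [e, h1]; linarith
    · have h1 : (0:ℝ) ≤ dist (g.symm w) w := dist_nonneg
      linarith
    · simp
  -- anchor canonical function
  set F : U → ℝ := fun z => (Finset.univ : Finset (Anc U X' n)).inf' hAne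
      (fun κ => aval g X' hX b a S κ + dist (apt g X' p w κ) z) with hFdef
  have hF_le : ∀ (κ : Anc U X' n) (z : U),
      F z ≤ aval g X' hX b a S κ + dist (apt g X' p w κ) z :=
    fun κ z => Finset.inf'_le _ (Finset.mem_univ κ)
  have hF_pt : ∀ κ, F (apt g X' p w κ) = aval g X' hX b a S κ := by
    intro κ
    apply le_antisymm
    · simpa using hF_le κ (apt g X' p w κ)
    · apply Finset.le_inf'
      intro κ' _
      exact keyA κ κ'
  have hsums : ∀ κ κ' : Anc U X' n,
      dist (apt g X' p w κ) (apt g X' p w κ') ≤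
        aval g X' hX b a S κ + aval g X' hX b a S κ' := by
    have hNμ : ∀ x : {x // x ∈ X'}, NN g X' hX b x ≤ μ + dist b x := by
      intro x
      have := NN_le_MM_add (g := g) hX b b (x : U)
      linarith
    have hMμ : ∀ j, MM g X' hX b (a j) ≤ μ + dist b (a j) := by
      intro j
      have h1 := MM_lip_2 (g := g) hX b (a j) b
      have h2 : dist (a j) b = dist b (a j) := dist_comm _ _
      linarith
    intro κ κ'
    rcases κ with (x | j) | (_ | _) <;> rcases κ' with (x' | j') | (_ | _) <;>
      simp only [aval, apt]
    · exact dist_triangle_left _ _ _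
    · have e : dist (x : U) (p j') = dist (a j') (x : U) := by
        rw [dist_comm]; exact I1 j' x x.2
      have h1 : dist (a j') (x : U) ≤ dist (a j') b + dist b (x : U) := dist_triangle _ _ _
      have h2 : dist (a j') b = dist b (a j') := dist_comm _ _
      rw [e]; linarith
    · have e : dist (x : U) w = S + dist b x := by rw [dist_comm]; exact hwx x
      rw [e]; linarith
    · have e : dist (x : U) (g.symm w) = dist w (g x) := by rw [dist_comm, dsy, dist_comm]
      have h1 := hwgx x
      have h2 := hNμ x
      rw [e, h1]; linarith
    · have e : dist (p j) (x' : U) = dist (a j) (x' : U) := I1 j x' x'.2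
      have h1 : dist (a j) (x' : U) ≤ dist (a j) b + dist b (x' : U) := dist_triangle _ _ _
      have h2 : dist (a j) b = dist b (a j) := dist_comm _ _
      rw [e]; linarith
    · have e : dist (p j) (p j') = dist (a j) (a j') := I4 j j'
      have h1 : dist (a j) (a j') ≤ dist (a j) b + dist b (a j') := dist_triangle _ _ _
      have h2 : dist (a j) b = dist b (a j) := dist_comm _ _
      rw [e]; linarith
    · have e : dist (p j) w = S + dist b (a j) := by rw [dist_comm]; exact hwp j
      rw [e]; linarith
    · have e : dist (p j) (g.symm w) = dist w (g (p j)) := by rw [dist_comm, dsy, dist_comm]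
      have h1 := hwgp j
      have h2 := hMμ j
      rw [e, h1]; linarith
    · have e : dist w (x' : U) = S + dist b x' := hwx x'
      rw [e]
    · have e : dist w (p j') = S + dist b (a j') := hwp j'
      rw [e]
    · simp only [dist_self]; linarith
    · rw [hdisp2]; linarith
    · have e : dist (g.symm w) (x' : U) = dist w (g x') := by rw [dsy, dist_comm]
      have h1 := hwgx x'
      have h2 := hNμ x'
      rw [e, h1]; linarith
    · have e : dist (g.symm w) (p j') = dist w (g (p j')) := by rw [dsy, dist_comm]
      have h1 := hwgp j'
      have h2 := hMμ j'
      rw [e, h1]; linarith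
    · have e : dist (g.symm w) w = dist w (g w) := by rw [dsy, dist_comm]
      rw [e]; linarith
    · simp only [dist_self]; linarith
  have hFlip : ∀ z z' : U, F z ≤ F z' + dist z' z := by
    intro z z'
    obtain ⟨κ, _, e⟩ := Finset.exists_mem_eq_inf' hAne
      (fun κ => aval g X' hX b a S κ + dist (apt g X' p w κ) z')
    have h1 := hF_le κ z
    have h2 : dist (apt g X' p w κ) z ≤ dist (apt g X' p w κ) z' + dist z' z :=
      dist_triangle _ _ _
    have e' : F z' = aval g X' hX b a S κ + dist (apt g X' p w κ) z' := e
    linarith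
  have hkatF : ∀ z ∈ (↑(Finset.image (apt g X' p w) Finset.univ) : Set U),
      ∀ z' ∈ (↑(Finset.image (apt g X' p w) Finset.univ) : Set U),
      |F z - F z'| ≤ dist z z' ∧ dist z z' ≤ F z + F z' := by
    intro z hz z' hz'
    simp only [Finset.coe_image, Set.mem_image, Finset.mem_coe, Finset.coe_univ,
      Set.image_univ, Set.mem_range] at hz hz'
    obtain ⟨κ, rfl⟩ := hz
    obtain ⟨κ', rfl⟩ := hz'
    constructor
    · rw [abs_sub_le_iff]
      constructor
      · have := hFlip (apt g X' p w κ) (apt g X' p w κ')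
        have hc : dist (apt g X' p w κ') (apt g X' p w κ) =
            dist (apt g X' p w κ) (apt g X' p w κ') := dist_comm _ _
        linarith
      · have := hFlip (apt g X' p w κ') (apt g X' p w κ)
        linarith
    · rw [hF_pt κ, hF_pt κ']
      exact hsums κ κ'
  obtain ⟨q, hq⟩ := hU _ (Finset.finite_toSet _) F hkatF
  have hqa : ∀ κ, dist q (apt g X' p w κ) = aval g X' hX b a S κ := by
    intro κ
    rw [hq _ (Finset.mem_coe.2 (Finset.mem_image_of_mem _ (Finset.mem_univ κ))), hF_pt]
  have hqx : ∀ x ∈ X', dist q x = dist b x := by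
    intro x hx
    have := hqa (Sum.inl (Sum.inl ⟨x, hx⟩))
    simpa [apt, aval] using this
  have hqp : ∀ j, dist q (p j) = dist b (a j) := by
    intro j
    have := hqa (Sum.inl (Sum.inr j))
    simpa [apt, aval] using this
  have hqw : dist q w = S := by
    have := hqa (Sum.inr false)
    simpa [apt, aval] using this
  have hqt : dist q (g.symm w) = S + μ := by
    have := hqa (Sum.inr true)
    simpa [apt, aval] using this
  have hwq : dist w q = S := by rw [dist_comm]; exact hqw
  -- conclusion 2
  have hq2 : ∀ x ∈ X', dist q (g x) = NN g X' hX b x := by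
    intro x hx
    apply le_antisymm
    · obtain ⟨z, hz, e⟩ := exists_NN (g := g) hX b x
      have h1 : dist q (g x) ≤ dist q z + dist z (g x) := dist_triangle _ _ _
      rw [hqx z hz] at h1
      rw [e]; exact h1
    · have h1 : dist w (g x) ≤ dist w q + dist q (g x) := dist_triangle _ _ _
      have h2 : dist w (g x) = S + NN g X' hX b x := hwgx ⟨x, hx⟩
      rw [h2, hwq] at h1
      linarith
  -- conclusion 3
  have hq3 : ∀ x ∈ X', dist q (g.symm x) = PP g X' hX b x := by
    intro x hx
    apply le_antisymm
    · obtain ⟨y, hy, e⟩ := exists_PP (g := g) hX b x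
      have h1 : dist q (g.symm x) ≤ dist q y + dist y (g.symm x) := dist_triangle _ _ _
      have h2 : dist y (g.symm x) = dist x (g y) := by rw [dist_comm, dsy]
      rw [hqx y hy, h2] at h1
      rw [e]; linarith
    · have h1 : dist w (g.symm x) ≤ dist w q + dist q (g.symm x) := dist_triangle _ _ _
      have h2 : dist w (g.symm x) = S + PP g X' hX b x := hwsx ⟨x, hx⟩
      rw [h2, hwq] at h1
      linarith
  -- conclusion 5
  have hq5 : ∀ j, dist q (g (p j)) = MM g X' hX b (a j) := by
    intro j
    apply le_antisymm
    · obtain ⟨z, hz, e⟩ := exists_MM₂ (g := g) hX b (a j)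
      have h1 : dist q (g (p j)) ≤ dist q z + dist z (g (p j)) := dist_triangle _ _ _
      have h2 : dist z (g (p j)) = PP g X' hX (a j) z := by
        rw [← dsy, dist_comm]; exact I3 j z hz
      rw [hqx z hz, h2] at h1
      rw [e]; exact h1
    · have h1 : dist w (g (p j)) ≤ dist w q + dist q (g (p j)) := dist_triangle _ _ _
      rw [hwgp j, hwq] at h1
      linarith
  -- conclusion 6
  have hq6 : ∀ j, dist q (g.symm (p j)) = MM g X' hX (a j) b := by
    intro j
    apply le_antisymm
    · obtain ⟨y, hy, e⟩ := exists_MM (g := g) hX (a j) b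
      have h1 : dist q (g.symm (p j)) ≤ dist q y + dist y (g.symm (p j)) := dist_triangle _ _ _
      have h2 : dist y (g.symm (p j)) = NN g X' hX (a j) y := by
        rw [dist_comm, dsy]; exact I2 j y hy
      rw [hqx y hy, h2] at h1
      rw [e]; linarith
    · have h1 : dist w (g.symm (p j)) ≤ dist w q + dist q (g.symm (p j)) := dist_triangle _ _ _
      rw [hwsp j, hwq] at h1
      linarith
  -- conclusion 7
  have hq7 : dist q (g q) = μ := by
    apply le_antisymm
    · obtain ⟨z, hz, e⟩ := exists_MM₂ (g := g) hX b b
      have h1 : dist q (g q) ≤ dist q z + dist z (g q) := dist_triangle _ _ _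
      have h2 : dist z (g q) = dist q (g.symm z) := by
        rw [← dsy z q, dist_comm]
      rw [hqx z hz, h2, hq3 z hz] at h1
      rw [hμdef, e]; exact h1
    · have h0 : dist (g q) w = dist q (g.symm w) := by
        rw [← dss (g q) w, g.symm_apply_apply]
      have h1 : dist (g q) w ≤ dist (g q) q + dist q w := dist_triangle _ _ _
      have h2 : dist (g q) q = dist q (g q) := dist_comm _ _
      rw [h0, hqt, hqw, h2] at h1
      linarith
  exact ⟨q, hqx, hq2, hq3, hqp, hq5, hq6, hq7⟩

end StepLemma

section Build

variable {U : Type*} [MetricSpace U] {g : U ≃ᵢ U} {X' : Finset U} (hX : X'.Nonempty)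

lemma build (hU : FinitelyInjective U) (hg : IsUnbounded g) :
    ∀ (n : ℕ) (a : Fin n → U), ∃ p : Fin n → U,
      (∀ i, ∀ x ∈ X', dist (p i) x = dist (a i) x) ∧
      (∀ i, ∀ x ∈ X', dist (p i) (g x) = NN g X' hX (a i) x) ∧
      (∀ i, ∀ x ∈ X', dist (p i) (g.symm x) = PP g X' hX (a i) x) ∧
      (∀ i j, dist (p i) (p j) = dist (a i) (a j)) ∧
      (∀ i j, dist (p i) (g (p j)) = MM g X' hX (a i) (a j)) := by
  intro n
  induction n with
  | zero =>
    intro a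
    exact ⟨a, fun i => i.elim0, fun i => i.elim0, fun i => i.elim0,
      fun i => i.elim0, fun i => i.elim0⟩
  | succ n IH =>
    intro a
    obtain ⟨p, h1, h2, h3, h4, h5⟩ := IH (a ∘ Fin.castSucc)
    obtain ⟨q, q1, q2, q3, q4, q5, q6, q7⟩ := step hX hU hg (a ∘ Fin.castSucc) p
      h1 h2 h3 h4 h5 (a (Fin.last n))
    have dsy : ∀ z w : U, dist (g.symm z) w = dist z (g w) := fun z w => dsymm z w
    refine ⟨Fin.snoc p q, ?_, ?_, ?_, ?_, ?_⟩
    · intro i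
      refine Fin.lastCases ?_ ?_ i
      · intro x hx
        simpa only [Fin.snoc_last] using q1 x hx
      · intro i x hx
        simpa only [Fin.snoc_castSucc, Function.comp_apply] using h1 i x hx
    · intro i
      refine Fin.lastCases ?_ ?_ i
      · intro x hx
        simpa only [Fin.snoc_last] using q2 x hx
      · intro i x hx
        simpa only [Fin.snoc_castSucc, Function.comp_apply] using h2 i x hx
    · intro i
      refine Fin.lastCases ?_ ?_ i
      · intro x hx
        simpa only [Fin.snoc_last] using q3 x hx
      · intro i x hx
        simpa only [Fin.snoc_castSucc, Function.comp_apply] using h3 i x hx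
    · intro i
      refine Fin.lastCases ?_ ?_ i
      · intro j
        refine Fin.lastCases ?_ ?_ j
        · simp only [Fin.snoc_last, dist_self]
        · intro j
          simpa only [Fin.snoc_last, Fin.snoc_castSucc, Function.comp_apply] using q4 j
      · intro i j
        refine Fin.lastCases ?_ ?_ j
        · simp only [Fin.snoc_last, Fin.snoc_castSucc]
          rw [dist_comm, dist_comm (a (Fin.castSucc i)) (a (Fin.last n))]
          exact q4 i
        · intro j
          simpa only [Fin.snoc_castSucc, Function.comp_apply] using h4 i j
    · intro i
      refine Fin.lastCases ?_ ?_ i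
      · intro j
        refine Fin.lastCases ?_ ?_ j
        · simpa only [Fin.snoc_last] using q7
        · intro j
          simpa only [Fin.snoc_last, Fin.snoc_castSucc, Function.comp_apply] using q5 j
      · intro i j
        refine Fin.lastCases ?_ ?_ j
        · simp only [Fin.snoc_last, Fin.snoc_castSucc]
          rw [← dsy (p i) q, dist_comm]
          exact q6 i
        · intro j
          simpa only [Fin.snoc_castSucc, Function.comp_apply] using h5 i j

end Build


/-- Proposition 4.1: every unbounded isometry of the Urysohn space moves maximally. -/
theorem unbounded_moves_maximally {U : Type*} [MetricSpace U] [Nonempty U] [CompleteSpace U]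
    [TopologicalSpace.SeparableSpace U] (hU : FinitelyInjective U)
    (g : U ≃ᵢ U) (hg : IsUnbounded g) :
    ∀ X : Set U, X.Finite → X.Nonempty → ∀ {n : ℕ} (a : Fin n → U),
      ∃ a' : Fin n → U,
        (∀ i j, dist (a' i) (a' j) = dist (a i) (a j)) ∧
        (∀ i, ∀ x ∈ X, dist (a' i) x = dist (a i) x) ∧
        MIndep (Set.range a') X ((g '' X) ∪ Set.range fun i => g (a' i)) ∧
        MIndep (Set.range a' ∪ X) (g '' X) (Set.range fun i => g (a' i)) := by
  intro X hfin hne n a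
  classical
  set X' := hfin.toFinset with hX'def
  have hX : X'.Nonempty := (Set.Finite.toFinset_nonempty hfin).2 hne
  have hmem : ∀ x, x ∈ X' ↔ x ∈ X := fun x => hfin.mem_toFinset
  obtain ⟨p, J1, J2, J3, J4, J5⟩ := build hX hU hg n a
  have dsy : ∀ z w : U, dist (g.symm z) w = dist z (g w) := fun z w => dsymm z w
  have dgg : ∀ z w : U, dist (g z) (g w) = dist z w := fun z w => dG z w
  refine ⟨p, J4, ?_, ?_, ?_⟩
  · intro i x hx
    exact J1 i x ((hmem x).2 hx)
  · rintro v ⟨i, rfl⟩ c hc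
    rcases hc with ⟨x, hxX, rfl⟩ | ⟨j, rfl⟩
    · obtain ⟨z, hz, e⟩ := exists_NN (g := g) hX (a i) x
      refine ⟨z, (hmem z).1 hz, ?_⟩
      rw [J2 i x ((hmem x).2 hxX), J1 i z hz, e]
    · obtain ⟨z, hz, e⟩ := exists_MM₂ (g := g) hX (a i) (a j)
      refine ⟨z, (hmem z).1 hz, ?_⟩
      have h2 : dist z (g (p j)) = PP g X' hX (a j) z := by
        rw [← dsy z (p j), dist_comm]
        exact J3 j z hz
      rw [J5 i j, J1 i z hz, h2, e]
  · rintro v hv c ⟨j, rfl⟩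
    rcases hv with ⟨i, rfl⟩ | hvX
    · obtain ⟨y, hy, e⟩ := exists_MM (g := g) hX (a i) (a j)
      refine ⟨g y, Set.mem_image_of_mem g ((hmem y).1 hy), ?_⟩
      have h2 : dist (g y) (g (p j)) = dist (a j) y := by
        rw [dgg, dist_comm]
        exact J1 j y hy
      rw [J5 i j, J2 i y hy, h2, e]
    · obtain ⟨y, hy, e⟩ := exists_PP (g := g) hX (a j) v
      refine ⟨g y, Set.mem_image_of_mem g ((hmem y).1 hy), ?_⟩
      have h1 : dist v (g (p j)) = PP g X' hX (a j) v := by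
        rw [← dsy v (p j), dist_comm]
        exact J3 j v ((hmem v).2 hvX)
      have h2 : dist (g y) (g (p j)) = dist (a j) y := by
        rw [dgg, dist_comm]
        exact J1 j y hy
      rw [h1, h2, e]

end TentZieglerU
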